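/- Let C be a braided monoidal category, X an object of C with a right dual Xᘁ (with evaluation ε_X : Xᘁ ⊗ X ⟶ 𝟙 and coevaluation η_X : 𝟙 ⟶ X ⊗ Xᘁ), and F : C ⥤ FGModuleCat k a braided strong monoidal functor. Then the endomorphism F(η_X ≫ β_{X,Xᘁ} ≫ ε_X) of F(𝟙), transported along the unit isomorphism k ≅ F(𝟙), is multiplication by the scalar (finrank_k F(X) : k). (This expresses that a TQFT valued in finite-dimensional vector spaces assigns to the 'quantum dimension' morphism of an object its state space's dimension, the mechanism behind dim Z(Σ) = Z(S¹ × Σ) in the proof of Theorem 3.) -/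

import Mathlib

open CategoryTheory MonoidalCategory

universe w v u

section Zigzag

open Functor.LaxMonoidal Functor.OplaxMonoidal

variable {C' : Type*} [Category C'] [MonoidalCategory C']
  {D' : Type*} [Category D'] [MonoidalCategory D']

/-- A strong monoidal functor pushes forward the zig-zag identity of an exact pairing. -/
lemma push_zigzag (F : C' ⥤ D') [F.Monoidal] (X Y : C') [ExactPairing X Y] :
    (ε F ≫ F.map (η_ X Y) ≫ δ F X Y) ▷ F.obj X ≫ (α_ (F.obj X) (F.obj Y) (F.obj X)).hom ≫
      F.obj X ◁ (μ F Y X ≫ F.map (ε_ X Y) ≫ η F) =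
    (λ_ (F.obj X)).hom ≫ (ρ_ (F.obj X)).inv := by
  have hA : δ F X Y ▷ F.obj X ≫ (α_ (F.obj X) (F.obj Y) (F.obj X)).hom ≫
      F.obj X ◁ μ F Y X = μ F (X ⊗ Y) X ≫ F.map (α_ X Y X).hom ≫ δ F X (Y ⊗ X) := by
    rw [← cancel_mono (μ F X (Y ⊗ X))]
    slice_lhs 2 4 => rw [← Functor.LaxMonoidal.associativity]
    slice_lhs 1 2 => rw [Functor.Monoidal.whiskerRight_δ_μ]
    slice_rhs 3 4 => rw [Functor.Monoidal.δ_μ]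
    simp only [Category.id_comp, Category.comp_id, Category.assoc]
  simp only [comp_whiskerRight, MonoidalCategory.whiskerLeft_comp, Category.assoc]
  slice_lhs 3 5 => rw [hA]
  slice_lhs 2 3 => rw [Functor.LaxMonoidal.μ_natural_left]
  slice_lhs 5 6 => rw [Functor.OplaxMonoidal.δ_natural_right]
  slice_lhs 3 5 => rw [← F.map_comp, ← F.map_comp, ExactPairing.evaluation_coevaluation]
  rw [F.map_comp]
  slice_lhs 1 3 => rw [← Functor.LaxMonoidal.left_unitality]
  slice_lhs 2 4 => rw [← Functor.OplaxMonoidal.right_unitality]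

end Zigzag

open Module in
/-- In `FGModuleCat k`, any pairing satisfying the (evaluation-coevaluation) zig-zag identity
has quantum dimension equal to the dimension of the underlying vector space. -/
lemma fg_quantum_dim {k : Type u} [Field k] {V W : FGModuleCat k}
    (c : 𝟙_ (FGModuleCat k) ⟶ V ⊗ W) (e : W ⊗ V ⟶ 𝟙_ (FGModuleCat k))
    (h : c ▷ V ≫ (α_ V W V).hom ≫ V ◁ e = (λ_ V).hom ≫ (ρ_ V).inv) :
    c ≫ (β_ V W).hom ≫ e = (finrank k V : k) • 𝟙 (𝟙_ (FGModuleCat k)) := by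
  let e' : TensorProduct k W V →ₗ[k] k := e.hom.hom
  let φ : W →ₗ[k] Module.Dual k V := TensorProduct.curry e'
  let L : TensorProduct k V W →ₗ[k] (V →ₗ[k] V) :=
    (dualTensorHom k V V) ∘ₗ (TensorProduct.map φ LinearMap.id) ∘ₗ
      (TensorProduct.comm k V W).toLinearMap
  let t : TensorProduct k V W := c (show k from 1)
  have hL : ∀ (s : TensorProduct k V W) (v : V),
      L s v = TensorProduct.rid k V ((V ◁ e) ((α_ V W V).hom (s ⊗ₜ v))) := by
    intro s v
    induction s using TensorProduct.induction_on with
    | zero => simp [L, TensorProduct.zero_tmul]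
    | tmul x w =>
        have h1 : (α_ V W V).hom ((x ⊗ₜ w) ⊗ₜ v) = x ⊗ₜ (w ⊗ₜ v) := rfl
        have h2 : (V ◁ e) (x ⊗ₜ (w ⊗ₜ v)) = x ⊗ₜ e (w ⊗ₜ v) := rfl
        rw [h1, h2]
        simp only [L, φ, e', LinearMap.coe_comp, Function.comp_apply,
          LinearEquiv.coe_coe, TensorProduct.comm_tmul, TensorProduct.map_tmul,
          LinearMap.id_coe, id_eq, dualTensorHom_apply, TensorProduct.curry_apply,
          TensorProduct.rid_tmul]
        rfl
    | add s₁ s₂ h₁ h₂ =>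
        simp only [TensorProduct.add_tmul, map_add, LinearMap.add_apply, h₁, h₂]
  have hid : L t = LinearMap.id := by
    apply LinearMap.ext
    intro v
    have happ : (c ▷ V ≫ (α_ V W V).hom ≫ V ◁ e) ((show k from 1) ⊗ₜ v) =
        ((λ_ V).hom ≫ (ρ_ V).inv) ((show k from 1) ⊗ₜ v) := by rw [h]
    have hl : (c ▷ V ≫ (α_ V W V).hom ≫ V ◁ e) ((show k from 1) ⊗ₜ v) =
        (V ◁ e) ((α_ V W V).hom (t ⊗ₜ v)) := rfl
    have hr : ((λ_ V).hom ≫ (ρ_ V).inv) ((show k from 1) ⊗ₜ v) = v ⊗ₜ (show k from 1) := by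
      show (ρ_ V).inv ((λ_ V).hom ((show k from 1) ⊗ₜ v)) = v ⊗ₜ (show k from 1)
      have : (λ_ V).hom ((show k from 1) ⊗ₜ v) = v := by
        show (1:k) • v = v
        simp
      rw [this]
      rfl
    rw [hL, hl.symm, happ, hr]
    show (1:k) • v = v
    simp
  have h2 : e ((β_ V W).hom t) =
      contractLeft k V ((TensorProduct.map φ LinearMap.id) ((TensorProduct.comm k V W) t)) := by
    induction t using TensorProduct.induction_on with
    | zero => simp
    | tmul x w =>
        have h1 : (β_ V W).hom (x ⊗ₜ w : TensorProduct k V W) = w ⊗ₜ x := rfl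
        rw [h1]
        simp only [TensorProduct.comm_tmul, TensorProduct.map_tmul, contractLeft_apply,
          TensorProduct.curry_apply, LinearMap.id_coe, id_eq, φ, e']
        rfl
    | add s₁ s₂ h₁ h₂ => simp only [map_add, h₁, h₂]
  apply FGModuleCat.hom_ext
  refine LinearMap.ext_ring ?_
  show e ((β_ V W).hom t) = (finrank k V : k) • (1 : k)
  rw [h2]
  have h3 := LinearMap.congr_fun (LinearMap.trace_eq_contract k V)
    ((TensorProduct.map φ LinearMap.id) ((TensorProduct.comm k V W) t))
  rw [← h3]
  have h4 : (dualTensorHom k V V) ((TensorProduct.map φ LinearMap.id)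
      ((TensorProduct.comm k V W) t)) = L t := rfl
  rw [LinearMap.coe_comp, Function.comp_apply, h4, hid, LinearMap.trace_id, smul_eq_mul, mul_one]

/-- Let `C` be a braided monoidal category, `X` an object with a right dual `Xd` (an exact
pairing: evaluation `ε_X : Xd ⊗ X ⟶ 𝟙` and coevaluation `η_X : 𝟙 ⟶ X ⊗ Xd` satisfying the
zig-zag identities), and `F : C ⥤ FGModuleCat k` a braided strong monoidal functor.  Then
the endomorphism `F(η_X ≫ β_{X,Xd} ≫ ε_X)` of `F(𝟙)`, transported along the unit
isomorphism `k ≅ F(𝟙)`, is multiplication by the scalar `(finrank k F(X) : k)`. -/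
theorem map_quantum_dimension_eq_finrank {k : Type u} [Field k]
    {C : Type w} [Category.{v} C] [MonoidalCategory C] [BraidedCategory C]
    (X Xd : C) [ExactPairing X Xd]
    (F : C ⥤ FGModuleCat k) [F.Braided] :
    Functor.LaxMonoidal.ε F ≫ F.map (η_ X Xd ≫ (β_ X Xd).hom ≫ ε_ X Xd) ≫
        Functor.OplaxMonoidal.η F =
      (Module.finrank k (F.obj X) : k) • 𝟙 (𝟙_ (FGModuleCat k)) := by
  open Functor.LaxMonoidal Functor.OplaxMonoidal in
  have key : Functor.LaxMonoidal.ε F ≫ F.map (η_ X Xd ≫ (β_ X Xd).hom ≫ ε_ X Xd) ≫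
      Functor.OplaxMonoidal.η F =
      (ε F ≫ F.map (η_ X Xd) ≫ δ F X Xd) ≫ (β_ (F.obj X) (F.obj Xd)).hom ≫
        (μ F Xd X ≫ F.map (ε_ X Xd) ≫ η F) := by
    simp only [Functor.map_comp, Category.assoc]
    slice_rhs 4 5 => rw [← Functor.LaxBraided.braided]
    simp
  rw [key]
  exact fg_quantum_dim _ _ (push_zigzag F X Xd)
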